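/- With the CMDP data and uncertainty-set data below, let P_min : Matrix S S ℝ be substochastic with the property that every admissible deviation u satisfies P_min s s' ≤ p̄ s a s' + u s a s' for all s, a, s', and assume ∑_s γ s * (1 - α • P_min)⁻¹ s s' > 0 for every s' (Assumption B.1). Assume further that the polyhedral constraints enforce the probability-simplex conditions: for every s and every v : (A s × S) → ℝ with (B s).mulVec v ≤ b s entrywise, one has ∑_{s'} v (a, s') = 0 for every a and p̄ s a s' + v (a, s') ≥ 0 for all a, s'. Let Q' be the set of pairs (w, z) satisfying the same constraints as Q except that the constraint w s ≥ (1-α) * γ s is replaced by w s' ≥ (1-α) * ∑_s γ s * (1 - α • P_min)⁻¹ s s' for every s'. Then { (1-α) * (γ ⬝ᵥ ((1 - α • P_f(u))⁻¹).mulVec c_f) : u an admissible deviation } = { ∑_s w s * c_f s : (w, z) ∈ Q' }. -/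
import Mathlib


open Matrix BigOperators

/-- A matrix is substochastic if every entry is nonnegative and every row sum is at most 1. -/
def Substochastic {S : Type*} [Fintype S] (P : Matrix S S ℝ) : Prop :=
  (∀ s s', 0 ≤ P s s') ∧ ∀ s, ∑ s', P s s' ≤ 1

/-- The Euclidean norm of a vector indexed by a finite type. -/
noncomputable def euclNorm {n : Type*} [Fintype n] (v : n → ℝ) : ℝ :=
  Real.sqrt (∑ i, v i ^ 2)

section Aux
set_option linter.unusedSectionVars false

section Neumann
variable {S : Type*} [Fintype S] [DecidableEq S]

lemma pow_entry_nonneg {X : Matrix S S ℝ} (h : ∀ s s', 0 ≤ X s s') :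
    ∀ n s s', 0 ≤ (X ^ n) s s' := by
  intro n
  induction n with
  | zero => intro s s'; simp [Matrix.one_apply]; positivity
  | succ n ih =>
      intro s s'
      rw [pow_succ, Matrix.mul_apply]
      exact Finset.sum_nonneg fun k _ => mul_nonneg (ih s k) (h k s')

lemma pow_row_sum_le {X : Matrix S S ℝ} {c : ℝ} (hc : 0 ≤ c)
    (h0 : ∀ s s', 0 ≤ X s s') (h1 : ∀ s, ∑ s', X s s' ≤ c) :
    ∀ n s, ∑ s', (X ^ n) s s' ≤ c ^ n := by
  intro n
  induction n with
  | zero => intro s; simp [Matrix.one_apply]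
  | succ n ih =>
      intro s
      rw [pow_succ']
      calc ∑ s', (X * X ^ n) s s' = ∑ s', ∑ k, X s k * (X ^ n) k s' := by
            simp [Matrix.mul_apply]
        _ = ∑ k, X s k * ∑ s', (X ^ n) k s' := by
            rw [Finset.sum_comm]; simp [Finset.mul_sum]
        _ ≤ ∑ k, X s k * c ^ n := by
            refine Finset.sum_le_sum fun k _ => ?_
            exact mul_le_mul_of_nonneg_left (ih k) (h0 s k)
        _ = (∑ k, X s k) * c ^ n := by rw [Finset.sum_mul]
        _ ≤ c * c ^ n := mul_le_mul_of_nonneg_right (h1 s) (by positivity)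
        _ = c ^ (n + 1) := (pow_succ' c n).symm

lemma summable_pow_entry {X : Matrix S S ℝ} {c : ℝ} (hc0 : 0 ≤ c) (hc1 : c < 1)
    (h0 : ∀ s s', 0 ≤ X s s') (h1 : ∀ s, ∑ s', X s s' ≤ c) (s s' : S) :
    Summable (fun n => (X ^ n) s s') := by
  refine Summable.of_nonneg_of_le (fun n => pow_entry_nonneg h0 n s s') (fun n => ?_)
    (summable_geometric_of_lt_one hc0 hc1)
  calc (X ^ n) s s' ≤ ∑ t, (X ^ n) s t := by
        refine Finset.single_le_sum (fun t _ => pow_entry_nonneg h0 n s t) (Finset.mem_univ s')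
    _ ≤ c ^ n := pow_row_sum_le hc0 h0 h1 n s

end Neumann

section Neumann2
variable {S : Type*} [Fintype S] [DecidableEq S]

/-- Neumann series: `(1 - X) * Y = 1` where `Y` is the entrywise sum of powers. -/
lemma one_sub_mul_neumann {X : Matrix S S ℝ} {c : ℝ} (hc0 : 0 ≤ c) (hc1 : c < 1)
    (h0 : ∀ s s', 0 ≤ X s s') (h1 : ∀ s, ∑ s', X s s' ≤ c) :
    (1 - X) * (Matrix.of fun s s' => ∑' n, (X ^ n) s s') = 1 := by
  ext s s'
  have hsum : ∀ k k', Summable (fun n => (X ^ n) k k') :=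
    summable_pow_entry hc0 hc1 h0 h1
  rw [Matrix.mul_apply]
  have step : ∀ k, (1 - X) s k * (Matrix.of fun s s' => ∑' n, (X ^ n) s s') k s'
      = (if s = k then (1:ℝ) else 0) * ∑' n, (X ^ n) k s' - ∑' n, X s k * (X ^ n) k s' := by
    intro k
    simp only [Matrix.sub_apply, Matrix.one_apply, Matrix.of_apply, sub_mul]
    rw [tsum_mul_left]
  rw [Finset.sum_congr rfl fun k _ => step k, Finset.sum_sub_distrib]
  simp only [ite_mul, one_mul, zero_mul]
  rw [Finset.sum_ite_eq, if_pos (Finset.mem_univ s)]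
  rw [← Summable.tsum_finsetSum (fun k _ => (hsum k s').mul_left (X s k))]
  have hXn1 : ∀ n : ℕ, ∑ k, X s k * (X ^ n) k s' = (X ^ (n+1)) s s' := by
    intro n; rw [pow_succ', Matrix.mul_apply]
  rw [tsum_congr hXn1]
  rw [Summable.tsum_eq_zero_add (hsum s s')]
  rw [pow_zero]
  ring

lemma neumann_inv {X : Matrix S S ℝ} {c : ℝ} (hc0 : 0 ≤ c) (hc1 : c < 1)
    (h0 : ∀ s s', 0 ≤ X s s') (h1 : ∀ s, ∑ s', X s s' ≤ c) :
    (1 - X)⁻¹ = (Matrix.of fun s s' => ∑' n, (X ^ n) s s') :=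
  Matrix.inv_eq_right_inv (one_sub_mul_neumann hc0 hc1 h0 h1)

lemma neumann_isUnit {X : Matrix S S ℝ} {c : ℝ} (hc0 : 0 ≤ c) (hc1 : c < 1)
    (h0 : ∀ s s', 0 ≤ X s s') (h1 : ∀ s, ∑ s', X s s' ≤ c) :
    IsUnit (1 - X).det :=
  Matrix.isUnit_det_of_right_inverse (one_sub_mul_neumann hc0 hc1 h0 h1)

end Neumann2

section Mono
variable {S : Type*} [Fintype S] [DecidableEq S]

lemma pow_entry_mono {X Y : Matrix S S ℝ} (hX0 : ∀ s s', 0 ≤ X s s')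
    (hle : ∀ s s', X s s' ≤ Y s s') :
    ∀ n s s', (X ^ n) s s' ≤ (Y ^ n) s s' := by
  have hY0 : ∀ s s', 0 ≤ Y s s' := fun s s' => le_trans (hX0 s s') (hle s s')
  intro n
  induction n with
  | zero => intro s s'; simp
  | succ n ih =>
      intro s s'
      rw [pow_succ, pow_succ, Matrix.mul_apply, Matrix.mul_apply]
      refine Finset.sum_le_sum fun k _ => ?_
      exact mul_le_mul (ih s k) (hle k s') (hX0 k s') (pow_entry_nonneg hY0 n s k)

variable {α : ℝ} {P : Matrix S S ℝ}

lemma smul_entry_nonneg (hα0 : 0 < α) (hP : Substochastic P) :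
    ∀ s s', 0 ≤ (α • P) s s' := fun s s' => by
  simpa using mul_nonneg hα0.le (hP.1 s s')

lemma smul_row_sum (hα0 : 0 < α) (hP : Substochastic P) :
    ∀ s, ∑ s', (α • P) s s' ≤ α := fun s => by
  simp only [Matrix.smul_apply, smul_eq_mul, ← Finset.mul_sum]
  calc α * ∑ s', P s s' ≤ α * 1 := mul_le_mul_of_nonneg_left (hP.2 s) hα0.le
    _ = α := mul_one α

lemma inv_one_sub_smul_eq (hα0 : 0 < α) (hα1 : α < 1) (hP : Substochastic P) :
    (1 - α • P)⁻¹ = (Matrix.of fun s s' => ∑' n, ((α • P) ^ n) s s') :=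
  neumann_inv hα0.le hα1 (smul_entry_nonneg hα0 hP) (smul_row_sum hα0 hP)

lemma isUnit_one_sub_smul (hα0 : 0 < α) (hα1 : α < 1) (hP : Substochastic P) :
    IsUnit (1 - α • P).det :=
  neumann_isUnit hα0.le hα1 (smul_entry_nonneg hα0 hP) (smul_row_sum hα0 hP)

lemma inv_one_sub_smul_mono {Pmin : Matrix S S ℝ} (hα0 : 0 < α) (hα1 : α < 1)
    (hPm : Substochastic Pmin) (hP : Substochastic P)
    (hle : ∀ s s', Pmin s s' ≤ P s s') :
    ∀ s s', (1 - α • Pmin)⁻¹ s s' ≤ (1 - α • P)⁻¹ s s' := by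
  intro s s'
  rw [inv_one_sub_smul_eq hα0 hα1 hPm, inv_one_sub_smul_eq hα0 hα1 hP]
  simp only [Matrix.of_apply]
  refine Summable.tsum_le_tsum (fun n => ?_)
    (summable_pow_entry hα0.le hα1 (smul_entry_nonneg hα0 hPm) (smul_row_sum hα0 hPm) s s')
    (summable_pow_entry hα0.le hα1 (smul_entry_nonneg hα0 hP) (smul_row_sum hα0 hP) s s')
  refine pow_entry_mono (smul_entry_nonneg hα0 hPm) (fun t t' => ?_) n s s'
  simpa using mul_le_mul_of_nonneg_left (hle t t') hα0.le

end Mono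

lemma euclNorm_smul {n : Type*} [Fintype n] {c : ℝ} (hc : 0 ≤ c) (v : n → ℝ) :
    euclNorm (c • v) = c * euclNorm v := by
  unfold euclNorm
  have : ∑ i, (c • v) i ^ 2 = c ^ 2 * ∑ i, v i ^ 2 := by
    rw [Finset.mul_sum]
    refine Finset.sum_congr rfl fun i _ => ?_
    simp [smul_eq_mul]; ring
  rw [this, Real.sqrt_mul (sq_nonneg c), Real.sqrt_sq hc]

lemma vec_sum_inv {S : Type*} [Fintype S] [DecidableEq S] {N Q : Matrix S S ℝ} (h : N * Q = 1)
    (γ : S → ℝ) (s' : S) :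
    ∑ s, (∑ σ, γ σ * N σ s) * Q s s' = γ s' := by
  have h2 : (γ ᵥ* N) ᵥ* Q = γ := by rw [Matrix.vecMul_vecMul, h, Matrix.vecMul_one]
  have := congrFun h2 s'
  simpa [Matrix.vecMul, dotProduct] using this


section Helpers
set_option linter.unusedSectionVars false

lemma substochastic_of_simplex {S : Type*} [Fintype S] {A : S → Type*} [∀ s, Fintype (A s)]
    (f : (s : S) → A s → ℝ) (hf0 : ∀ s a, 0 ≤ f s a) (hf1 : ∀ s, ∑ a, f s a = 1)
    (pbar : (s : S) → A s → S → ℝ) (hpbar1 : ∀ s a, ∑ s', pbar s a s' = 1)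
    (u : (s : S) → A s → S → ℝ)
    (h : ∀ s, (∀ a, ∑ s', u s a s' = 0) ∧ ∀ a s', 0 ≤ pbar s a s' + u s a s') :
    Substochastic (Matrix.of fun s s' => ∑ a, f s a * (pbar s a s' + u s a s')) := by
  constructor
  · intro s s'
    exact Finset.sum_nonneg fun a _ => mul_nonneg (hf0 s a) ((h s).2 a s')
  · intro s
    have : ∑ s', (Matrix.of fun s s' => ∑ a, f s a * (pbar s a s' + u s a s')) s s'
        = ∑ a, f s a * ∑ s', (pbar s a s' + u s a s') := by
      simp only [Matrix.of_apply]
      rw [Finset.sum_comm]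
      exact Finset.sum_congr rfl fun a _ => by rw [Finset.mul_sum]
    rw [this]
    have h1 : ∀ a : A s, ∑ s', (pbar s a s' + u s a s') = 1 := by
      intro a
      rw [Finset.sum_add_distrib, hpbar1 s a, (h s).1 a, add_zero]
    calc ∑ a, f s a * ∑ s', (pbar s a s' + u s a s') = ∑ a, f s a := by
          exact Finset.sum_congr rfl fun a _ => by rw [h1 a, mul_one]
      _ = 1 := hf1 s
      _ ≤ 1 := le_refl 1

lemma sum_swap_cf {S : Type*} [Fintype S] (α : ℝ) (γ cf : S → ℝ) (N : Matrix S S ℝ) :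
    (1 - α) * (γ ⬝ᵥ N.mulVec cf) = ∑ s, ((1 - α) * ∑ σ, γ σ * N σ s) * cf s := by
  simp only [dotProduct, Matrix.mulVec]
  have h : ∀ s : S, ((1 - α) * ∑ σ, γ σ * N σ s) * cf s
      = ∑ σ, (1 - α) * (γ σ * (N σ s * cf s)) := by
    intro s; rw [Finset.mul_sum, Finset.sum_mul]
    refine Finset.sum_congr rfl fun σ _ => by ring
  rw [Finset.sum_congr rfl fun s _ => h s, Finset.sum_comm, Finset.mul_sum]
  exact Finset.sum_congr rfl fun σ _ => by
    rw [Finset.mul_sum, Finset.mul_sum]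

end Helpers

end Aux

set_option linter.unusedSectionVars false in
theorem stmt_12 {S : Type*} [Fintype S] [Nonempty S] [DecidableEq S]
    {A : S → Type*} [∀ s, Fintype (A s)] [∀ s, Nonempty (A s)]
    -- stationary policy
    (f : (s : S) → A s → ℝ) (hf0 : ∀ s a, 0 ≤ f s a) (hf1 : ∀ s, ∑ a, f s a = 1)
    -- observed transition probabilities
    (pbar : (s : S) → A s → S → ℝ)
    (hpbar0 : ∀ s a s', 0 ≤ pbar s a s') (hpbar1 : ∀ s a, ∑ s', pbar s a s' = 1)
    (α : ℝ) (hα0 : 0 < α) (hα1 : α < 1)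
    -- initial distribution
    (γ : S → ℝ) (hγ0 : ∀ s, 0 ≤ γ s) (hγ1 : ∑ s, γ s = 1)
    -- cost vector
    (cf : S → ℝ)
    -- uncertainty-set data
    (ℓp ℓsc : S → ℕ)
    (B : (s : S) → Matrix (Fin (ℓp s)) (A s × S) ℝ) (b : (s : S) → Fin (ℓp s) → ℝ)
    (M : (s : S) → Matrix (A s × S) (Fin (ℓsc s)) ℝ) (m : (s : S) → Fin (ℓsc s) → ℝ)
    (x : (s : S) → A s × S → ℝ) (y : S → ℝ)
    -- the matrix P_min
    (Pmin : Matrix S S ℝ) (hPmin : Substochastic Pmin)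
    -- P_min lower-bounds the perturbed transition probabilities of admissible deviations
    (hPminLe : ∀ u : (s : S) → A s → S → ℝ,
        (∀ s, (∀ i, (B s).mulVec (fun p : A s × S => u s p.1 p.2) i ≤ b s i) ∧
          euclNorm ((M s)ᵀ.mulVec (fun p : A s × S => u s p.1 p.2) + m s)
            ≤ x s ⬝ᵥ (fun p : A s × S => u s p.1 p.2) + y s) →
        ∀ s a s', Pmin s s' ≤ pbar s a s' + u s a s')
    -- Assumption B.1
    (hB1 : ∀ s', 0 < ∑ s, γ s * (1 - α • Pmin)⁻¹ s s')
    -- the polyhedral constraints enforce the probability-simplex conditions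
    (hB : ∀ s, ∀ v : A s × S → ℝ, (∀ i, (B s).mulVec v i ≤ b s i) →
        (∀ a, ∑ s', v (a, s') = 0) ∧ ∀ a s', 0 ≤ pbar s a s' + v (a, s')) :
    {r : ℝ | ∃ u : (s : S) → A s → S → ℝ,
        (∀ s, ∀ i, (B s).mulVec (fun p : A s × S => u s p.1 p.2) i ≤ b s i) ∧
        (∀ s, euclNorm ((M s)ᵀ.mulVec (fun p : A s × S => u s p.1 p.2) + m s)
            ≤ x s ⬝ᵥ (fun p : A s × S => u s p.1 p.2) + y s) ∧
        r = (1 - α) * (γ ⬝ᵥ (((1 : Matrix S S ℝ)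
              - α • Matrix.of fun s s' => ∑ a, f s a * (pbar s a s' + u s a s'))⁻¹).mulVec cf)}
      =
    {r : ℝ | ∃ (w : S → ℝ) (z : (s : S) → A s × S → ℝ),
        (∀ s, ∀ i, (B s).mulVec (z s) i ≤ w s * b s i) ∧
        (∀ s, euclNorm ((M s)ᵀ.mulVec (z s) + w s • m s) ≤ x s ⬝ᵥ z s + y s * w s) ∧
        (∀ s', (1 - α) * ∑ σ, γ σ * (1 - α • Pmin)⁻¹ σ s' ≤ w s') ∧
        (∀ s' : S,
            (∑ s, w s * ((if s = s' then (1 : ℝ) else 0) - α * ∑ a, f s a * pbar s a s'))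
              - α * ∑ s, ∑ a, f s a * z s (a, s') = (1 - α) * γ s') ∧
        r = ∑ s, w s * cf s} := by
  have h1α : (0:ℝ) < 1 - α := by linarith
  ext r
  simp only [Set.mem_setOf_eq]
  constructor
  · rintro ⟨u, hBu, hNu, hr⟩
    have hsimp := fun s => hB s (fun p : A s × S => u s p.1 p.2) (hBu s)
    set P : Matrix S S ℝ := Matrix.of fun s s' => ∑ a, f s a * (pbar s a s' + u s a s')
      with hPdef
    have hPsub : Substochastic P :=
      substochastic_of_simplex f hf0 hf1 pbar hpbar1 u hsimp
    have hPge : ∀ s s', Pmin s s' ≤ P s s' := by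
      intro s s'
      have hmle := hPminLe u (fun s => ⟨hBu s, hNu s⟩)
      have h1 : ∑ a, f s a * Pmin s s' = Pmin s s' := by
        rw [← Finset.sum_mul, hf1, one_mul]
      show Pmin s s' ≤ ∑ a, f s a * (pbar s a s' + u s a s')
      rw [← h1]
      exact Finset.sum_le_sum fun a _ =>
        mul_le_mul_of_nonneg_left (hmle s a s') (hf0 s a)
    have hdet := isUnit_one_sub_smul hα0 hα1 hPsub
    set N := (1 - α • P)⁻¹ with hNdef
    have hNQ : N * (1 - α • P) = 1 := Matrix.nonsing_inv_mul _ hdet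
    set w : S → ℝ := fun s' => (1 - α) * ∑ σ, γ σ * N σ s' with hwdef
    have hwlb : ∀ s', (1 - α) * ∑ σ, γ σ * (1 - α • Pmin)⁻¹ σ s' ≤ w s' := by
      intro s'
      refine mul_le_mul_of_nonneg_left ?_ h1α.le
      exact Finset.sum_le_sum fun σ _ => mul_le_mul_of_nonneg_left
        (inv_one_sub_smul_mono hα0 hα1 hPmin hPsub hPge σ s') (hγ0 σ)
    have hwpos : ∀ s, 0 < w s := fun s =>
      lt_of_lt_of_le (mul_pos h1α (hB1 s)) (hwlb s)
    refine ⟨w, fun s => w s • (fun p : A s × S => u s p.1 p.2), ?_, ?_, hwlb, ?_, ?_⟩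
    · intro s i
      simp only [Matrix.mulVec_smul, Pi.smul_apply, smul_eq_mul]
      exact mul_le_mul_of_nonneg_left (hBu s i) (hwpos s).le
    · intro s
      have hv : (M s)ᵀ.mulVec (w s • fun p : A s × S => u s p.1 p.2) + w s • m s
          = w s • ((M s)ᵀ.mulVec (fun p : A s × S => u s p.1 p.2) + m s) := by
        rw [Matrix.mulVec_smul, smul_add]
      rw [hv, euclNorm_smul (hwpos s).le]
      have hd : x s ⬝ᵥ (w s • fun p : A s × S => u s p.1 p.2)
          = w s * (x s ⬝ᵥ fun p : A s × S => u s p.1 p.2) := by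
        rw [dotProduct_smul, smul_eq_mul]
      rw [hd]
      calc w s * euclNorm ((M s)ᵀ.mulVec (fun p : A s × S => u s p.1 p.2) + m s)
          ≤ w s * ((x s ⬝ᵥ fun p : A s × S => u s p.1 p.2) + y s) :=
            mul_le_mul_of_nonneg_left (hNu s) (hwpos s).le
        _ = w s * (x s ⬝ᵥ fun p : A s × S => u s p.1 p.2) + y s * w s := by ring
    · intro s'
      have hkey : ∑ s, w s * ((1 : Matrix S S ℝ) - α • P) s s' = (1 - α) * γ s' := by
        have h2 : ∑ s, w s * ((1 : Matrix S S ℝ) - α • P) s s'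
            = (1 - α) * ∑ s, (∑ σ, γ σ * N σ s) * ((1 : Matrix S S ℝ) - α • P) s s' := by
          rw [Finset.mul_sum]
          exact Finset.sum_congr rfl fun s _ => by rw [hwdef]; ring
        rw [h2, vec_sum_inv hNQ γ s']
      rw [← hkey, Finset.mul_sum, ← Finset.sum_sub_distrib]
      refine Finset.sum_congr rfl fun s _ => ?_
      have hQapp : ((1 : Matrix S S ℝ) - α • P) s s'
          = (if s = s' then (1:ℝ) else 0) - α * ∑ a, f s a * (pbar s a s' + u s a s') := by
        simp [hPdef, Matrix.sub_apply, Matrix.one_apply, Matrix.smul_apply, smul_eq_mul]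
      rw [hQapp]
      have h3 : ∑ a, f s a * (pbar s a s' + u s a s')
          = ∑ a, f s a * pbar s a s' + ∑ a, f s a * u s a s' := by
        rw [← Finset.sum_add_distrib]
        exact Finset.sum_congr rfl fun a _ => by ring
      have h4 : ∑ a, f s a * (w s • fun p : A s × S => u s p.1 p.2) (a, s')
          = w s * ∑ a, f s a * u s a s' := by
        rw [Finset.mul_sum]
        exact Finset.sum_congr rfl fun a _ => by
          simp only [Pi.smul_apply, smul_eq_mul]; ring
      rw [h4, h3]
      ring
    · rw [hr, hwdef, sum_swap_cf]
  · rintro ⟨w, z, hBz, hNz, hwlb, hbal, hr⟩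
    have hwpos : ∀ s, 0 < w s := fun s =>
      lt_of_lt_of_le (mul_pos h1α (hB1 s)) (hwlb s)
    set u : (s : S) → A s → S → ℝ := fun s a s' => (w s)⁻¹ * z s (a, s') with hudef
    have hfun : ∀ s, (fun p : A s × S => u s p.1 p.2) = (w s)⁻¹ • z s := by
      intro s; funext p
      simp [hudef]
    have hBu : ∀ s, ∀ i, (B s).mulVec (fun p : A s × S => u s p.1 p.2) i ≤ b s i := by
      intro s i
      rw [hfun s]
      simp only [Matrix.mulVec_smul, Pi.smul_apply, smul_eq_mul]
      calc (w s)⁻¹ * (B s).mulVec (z s) i ≤ (w s)⁻¹ * (w s * b s i) :=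
            mul_le_mul_of_nonneg_left (hBz s i) (inv_nonneg.mpr (hwpos s).le)
        _ = b s i := by
            rw [← mul_assoc, inv_mul_cancel₀ (hwpos s).ne', one_mul]
    have hNu : ∀ s, euclNorm ((M s)ᵀ.mulVec (fun p : A s × S => u s p.1 p.2) + m s)
        ≤ x s ⬝ᵥ (fun p : A s × S => u s p.1 p.2) + y s := by
      intro s
      rw [hfun s]
      have hv : (M s)ᵀ.mulVec ((w s)⁻¹ • z s) + m s
          = (w s)⁻¹ • ((M s)ᵀ.mulVec (z s) + w s • m s) := by
        rw [Matrix.mulVec_smul, smul_add, smul_smul, inv_mul_cancel₀ (hwpos s).ne', one_smul]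
      rw [hv, euclNorm_smul (inv_nonneg.mpr (hwpos s).le)]
      have hd : x s ⬝ᵥ ((w s)⁻¹ • z s) = (w s)⁻¹ * (x s ⬝ᵥ z s) := by
        rw [dotProduct_smul, smul_eq_mul]
      rw [hd]
      calc (w s)⁻¹ * euclNorm ((M s)ᵀ.mulVec (z s) + w s • m s)
          ≤ (w s)⁻¹ * (x s ⬝ᵥ z s + y s * w s) :=
            mul_le_mul_of_nonneg_left (hNz s) (inv_nonneg.mpr (hwpos s).le)
        _ = (w s)⁻¹ * (x s ⬝ᵥ z s) + y s := by
            rw [mul_add, mul_comm (y s) (w s), ← mul_assoc,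
              inv_mul_cancel₀ (hwpos s).ne', one_mul]
    refine ⟨u, hBu, hNu, ?_⟩
    have hzu : ∀ s (a : A s) s', z s (a, s') = w s * u s a s' := by
      intro s a s'
      rw [hudef]
      simp only
      rw [← mul_assoc, mul_inv_cancel₀ (hwpos s).ne', one_mul]
    have hsimp := fun s => hB s (fun p : A s × S => u s p.1 p.2) (hBu s)
    set P : Matrix S S ℝ := Matrix.of fun s s' => ∑ a, f s a * (pbar s a s' + u s a s')
      with hPdef
    have hPsub : Substochastic P :=
      substochastic_of_simplex f hf0 hf1 pbar hpbar1 u hsimp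
    have hdet := isUnit_one_sub_smul hα0 hα1 hPsub
    set N := (1 - α • P)⁻¹ with hNdef
    have hQN : (1 - α • P) * N = 1 := Matrix.mul_nonsing_inv _ hdet
    have hkey : ∀ σ, ∑ t, w t * ((1 : Matrix S S ℝ) - α • P) t σ = (1 - α) * γ σ := by
      intro σ
      rw [← hbal σ, Finset.mul_sum, ← Finset.sum_sub_distrib]
      refine Finset.sum_congr rfl fun t _ => ?_
      have hQapp : ((1 : Matrix S S ℝ) - α • P) t σ
          = (if t = σ then (1:ℝ) else 0) - α * ∑ a, f t a * (pbar t a σ + u t a σ) := by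
        simp [hPdef, Matrix.sub_apply, Matrix.one_apply, Matrix.smul_apply, smul_eq_mul]
      rw [hQapp]
      have h3 : ∑ a, f t a * (pbar t a σ + u t a σ)
          = ∑ a, f t a * pbar t a σ + ∑ a, f t a * u t a σ := by
        rw [← Finset.sum_add_distrib]
        exact Finset.sum_congr rfl fun a _ => by ring
      have h4 : ∑ a, f t a * z t (a, σ) = w t * ∑ a, f t a * u t a σ := by
        rw [Finset.mul_sum]
        exact Finset.sum_congr rfl fun a _ => by rw [hzu t a σ]; ring
      rw [h3, h4]
      ring
    have hws : ∀ s', w s' = (1 - α) * ∑ σ, γ σ * N σ s' := by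
      intro s'
      rw [← vec_sum_inv hQN w s', Finset.mul_sum]
      exact Finset.sum_congr rfl fun σ _ => by rw [hkey σ]; ring
    rw [hr, sum_swap_cf]
    exact Finset.sum_congr rfl fun s _ => by rw [hws s]
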